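/- arXiv:2112.05550 — 3 statements merged into one kernel-verified Lean document; each statement's English description precedes it below -/
import Mathlib

section
/- Let R be a discrete valuation ring with uniformizer t and fraction field K, and let n ≥ 1 and 0 ≤ k < n be integers. Inside the Laurent polynomial ring K[x,x⁻¹], identify R[x,x⁻¹], R[y,y⁻¹] (with y = tⁿ/x), and R[x, tⁿ/x] as subrings. Then the intersection R[x,x⁻¹] ∩ (R[(tⁿ/x), (tⁿ/x)⁻¹]·t^k) equals the ideal R[x, tⁿ/x]·x + R[x, tⁿ/x]·t^k of R[x, tⁿ/x]. -/
open LaurentPolynomial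

noncomputable section

/-- The image of `R` in `K[x,x⁻¹]` via constants. -/
def iotaR (R K : Type*) [CommRing R] [Field K] [Algebra R K] :
    R →+* LaurentPolynomial K :=
  LaurentPolynomial.C.comp (algebraMap R K)

/-- The subring `R[x,x⁻¹]` of `K[x,x⁻¹]`. -/
def ringA (R K : Type*) [CommRing R] [Field K] [Algebra R K] :
    Subring (LaurentPolynomial K) :=
  Subring.closure (Set.range (iotaR R K) ∪ {LaurentPolynomial.T 1, LaurentPolynomial.T (-1)})

/-- The subring `R[y,y⁻¹]` of `K[x,x⁻¹]`, where `y = tⁿ/x`. -/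
def ringB (R K : Type*) [CommRing R] [Field K] [Algebra R K] (t : R) (n : ℕ) :
    Subring (LaurentPolynomial K) :=
  Subring.closure (Set.range (iotaR R K) ∪
    {iotaR R K t ^ n * LaurentPolynomial.T (-1),
     LaurentPolynomial.C (algebraMap R K t)⁻¹ ^ n * LaurentPolynomial.T 1})

/-- The subring `R[x, tⁿ/x]` of `K[x,x⁻¹]`. -/
def ringM (R K : Type*) [CommRing R] [Field K] [Algebra R K] (t : R) (n : ℕ) :
    Subring (LaurentPolynomial K) :=
  Subring.closure (Set.range (iotaR R K) ∪
    {LaurentPolynomial.T 1, iotaR R K t ^ n * LaurentPolynomial.T (-1)})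

namespace Statement0Aux

variable {R K : Type*} [CommRing R] [Field K] [Algebra R K]

/-! ### The `R`-submodules `R·u^a ⊆ K` -/

def Sspan (t : R) (a : ℤ) : Submodule R K :=
  Submodule.span R {(algebraMap R K t) ^ a}

lemma mem_Sspan_iff {t : R} {a : ℤ} {z : K} :
    z ∈ Sspan t a ↔ ∃ r : R, z = algebraMap R K r * (algebraMap R K t) ^ a := by
  simp [Sspan, Submodule.mem_span_singleton, Algebra.smul_def, eq_comm]

lemma Sspan_mono {t : R} (hu : (algebraMap R K t) ≠ 0) {a b : ℤ} (h : b ≤ a) :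
    Sspan (K := K) t a ≤ Sspan t b := by
  rw [Sspan, Submodule.span_le, Set.singleton_subset_iff]
  refine mem_Sspan_iff.2 ⟨t ^ (a - b).toNat, ?_⟩
  rw [map_pow, ← zpow_natCast, Int.toNat_of_nonneg (by omega), ← zpow_add₀ hu]
  ring_nf

lemma mul_mem_Sspan {t : R} (hu : (algebraMap R K t) ≠ 0) {a b c : ℤ} (h : c ≤ a + b)
    {z w : K} (hz : z ∈ Sspan t a) (hw : w ∈ Sspan (K := K) t b) : z * w ∈ Sspan t c := by
  obtain ⟨r, rfl⟩ := mem_Sspan_iff.1 hz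
  obtain ⟨r', rfl⟩ := mem_Sspan_iff.1 hw
  refine Sspan_mono hu h (mem_Sspan_iff.2 ⟨r * r', ?_⟩)
  rw [map_mul, zpow_add₀ hu]; ring

lemma upow_mem_Sspan {t : R} {a : ℤ} : (algebraMap R K t) ^ a ∈ Sspan t a :=
  mem_Sspan_iff.2 ⟨1, by simp⟩

/-! ### The coefficient-wise filtered subrings -/

def Dsub (t : R) (c : ℤ → ℤ) (hc0 : c 0 = 0) (hadd : ∀ i j, c (i + j) ≤ c i + c j)
    (hu : (algebraMap R K t) ≠ 0) : Subring (LaurentPolynomial K) where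
  carrier := {f | ∀ i : ℤ, f.coeff i ∈ Sspan t (c i)}
  zero_mem' := fun i => by simp
  one_mem' := by
    intro i
    rcases eq_or_ne i 0 with rfl | h
    · rw [← single_zero_one_eq_one, AddMonoidAlgebra.coeff_single, Finsupp.single_apply, if_pos rfl]
      exact mem_Sspan_iff.2 ⟨1, by simp [hc0]⟩
    · rw [← single_zero_one_eq_one, AddMonoidAlgebra.coeff_single, Finsupp.single_apply, if_neg (by omega)]
      simp
  add_mem' := fun hf hg i => Submodule.add_mem _ (hf i) (hg i)
  neg_mem' := fun hf i => Submodule.neg_mem _ (hf i)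
  mul_mem' := by
    intro f g hf hg i
    rw [AddMonoidAlgebra.coeff_mul]
    refine Submodule.sum_mem _ fun a₁ _ => Submodule.sum_mem _ fun a₂ _ => ?_
    dsimp only
    split_ifs with h
    · exact mul_mem_Sspan hu (h ▸ hadd a₁ a₂) (hf a₁) (hg a₂)
    · simp

lemma mem_Dsub_iff {t : R} {c : ℤ → ℤ} {hc0} {hadd} {hu : (algebraMap R K t) ≠ 0}
    {f : LaurentPolynomial K} :
    f ∈ Dsub t c hc0 hadd hu ↔ ∀ i : ℤ, f.coeff i ∈ Sspan t (c i) := Iff.rfl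

lemma single_mem_Dsub {t : R} {c : ℤ → ℤ} {hc0} {hadd} {hu : (algebraMap R K t) ≠ 0}
    {j : ℤ} {z : K} (hz : z ∈ Sspan (K := K) t (c j)) :
    (AddMonoidAlgebra.single j z : LaurentPolynomial K) ∈ Dsub t c hc0 hadd hu := by
  intro i
  rw [AddMonoidAlgebra.coeff_single, Finsupp.single_apply]
  split_ifs with h
  · exact h ▸ hz
  · simp

/-! ### Generators as singles -/

lemma iotaR_eq_single (t : R) :
    iotaR R K t = AddMonoidAlgebra.single 0 (algebraMap R K t) := rfl

lemma T_eq_single (n : ℤ) : (T n : LaurentPolynomial K) = AddMonoidAlgebra.single n 1 := rfl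

lemma gen_y (t : R) (n : ℕ) :
    iotaR R K t ^ n * T (-1) = AddMonoidAlgebra.single (-1 : ℤ) ((algebraMap R K t) ^ n) := by
  rw [iotaR_eq_single, T_eq_single, AddMonoidAlgebra.single_pow,
    AddMonoidAlgebra.single_mul_single]
  simp

lemma gen_yinv (t : R) (n : ℕ) :
    (LaurentPolynomial.C (algebraMap R K t)⁻¹) ^ n * T 1 =
      AddMonoidAlgebra.single (1 : ℤ) ((algebraMap R K t)⁻¹ ^ n) := by
  rw [← single_eq_C, T_eq_single, AddMonoidAlgebra.single_pow,
    AddMonoidAlgebra.single_mul_single]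
  simp

lemma iotaR_pow (t : R) (k : ℕ) :
    iotaR R K t ^ k = AddMonoidAlgebra.single (0 : ℤ) ((algebraMap R K t) ^ k) := by
  rw [iotaR_eq_single, AddMonoidAlgebra.single_pow]
  simp

/-! ### Powers of the single generators -/

lemma single_pow_pos {t : R} (_hu : (algebraMap R K t) ≠ 0) (n : ℕ) {i : ℤ} (hi : 0 ≤ i) :
    ((LaurentPolynomial.C (algebraMap R K t)⁻¹) ^ n * T 1) ^ i.toNat
      = (AddMonoidAlgebra.single i ((algebraMap R K t) ^ (-(n : ℤ) * i)) : LaurentPolynomial K) := by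
  rw [gen_yinv, AddMonoidAlgebra.single_pow]
  congr 1
  · simp only [nsmul_eq_mul, mul_one]; omega
  · rw [← pow_mul, inv_pow, ← zpow_natCast, ← zpow_neg]
    congr 1
    push_cast
    rw [Int.toNat_of_nonneg hi]
    ring

lemma single_pow_neg {t : R} (_hu : (algebraMap R K t) ≠ 0) (n : ℕ) {i : ℤ} (hi : i < 0) :
    (iotaR R K t ^ n * T (-1)) ^ (-i).toNat
      = (AddMonoidAlgebra.single i ((algebraMap R K t) ^ (-(n : ℤ) * i)) : LaurentPolynomial K) := by
  rw [gen_y, AddMonoidAlgebra.single_pow]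
  congr 1
  · simp only [nsmul_eq_mul]; omega
  · rw [← pow_mul, ← zpow_natCast]
    congr 1
    push_cast
    rw [Int.toNat_of_nonneg (by omega : (0:ℤ) ≤ -i)]
    ring

/-! ### Decomposing a Laurent polynomial into singles -/

lemma mem_of_singles_mem {X : Subring (LaurentPolynomial K)} {f : LaurentPolynomial K}
    (h : ∀ i ∈ f.coeff.support, (AddMonoidAlgebra.single i (f.coeff i) : LaurentPolynomial K) ∈ X) : f ∈ X := by
  have := AddMonoidAlgebra.sum_coeff_single f
  rw [← this, Finsupp.sum]
  exact sum_mem h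

/-! ### Exponent functions -/

def cB (n : ℕ) : ℤ → ℤ := fun i => -(n : ℤ) * i

def cM (n : ℕ) : ℤ → ℤ := fun i => max 0 (-(n : ℤ) * i)

lemma cB_zero (n : ℕ) : cB n 0 = 0 := by simp [cB]

lemma cB_add (n : ℕ) (i j : ℤ) : cB n (i + j) ≤ cB n i + cB n j :=
  le_of_eq (by simp only [cB]; ring)

lemma cM_zero (n : ℕ) : cM n 0 = 0 := by simp [cM]

lemma cM_add (n : ℕ) (i j : ℤ) : cM n (i + j) ≤ cM n i + cM n j := by
  simp only [cM]
  have h : -(n : ℤ) * (i + j) = -(n : ℤ) * i + -(n : ℤ) * j := by ring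
  rw [h]; omega

def DA (t : R) (hu : (algebraMap R K t) ≠ 0) : Subring (LaurentPolynomial K) :=
  Dsub t (fun _ => 0) rfl (fun _ _ => by simp) hu

def DB (t : R) (n : ℕ) (hu : (algebraMap R K t) ≠ 0) : Subring (LaurentPolynomial K) :=
  Dsub t (cB n) (cB_zero n) (cB_add n) hu

def DM (t : R) (n : ℕ) (hu : (algebraMap R K t) ≠ 0) : Subring (LaurentPolynomial K) :=
  Dsub t (cM n) (cM_zero n) (cM_add n) hu

/-! ### The three closure characterizations -/

lemma T_mem_ringA (i : ℤ) : (T i : LaurentPolynomial K) ∈ ringA R K := by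
  have h1 : (T 1 : LaurentPolynomial K) ∈ ringA R K :=
    Subring.subset_closure (Or.inr (Set.mem_insert _ _))
  have h2 : (T (-1) : LaurentPolynomial K) ∈ ringA R K :=
    Subring.subset_closure (Or.inr (Set.mem_insert_of_mem _ rfl))
  have h : (T i : LaurentPolynomial K) = T 1 ^ i.toNat * T (-1) ^ (-i).toNat := by
    rw [T_pow, T_pow, ← T_add]; congr 1; omega
  rw [h]
  exact mul_mem (pow_mem h1 _) (pow_mem h2 _)

lemma single_iota_mul (r : R) (i : ℤ) (z : K) :
    (AddMonoidAlgebra.single i (algebraMap R K r * z) : LaurentPolynomial K)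
      = iotaR R K r * (AddMonoidAlgebra.single i z : LaurentPolynomial K) := by
  rw [iotaR_eq_single, AddMonoidAlgebra.single_mul_single, zero_add]

lemma single_eq_iota_mul_T (r : R) (i : ℤ) :
    (AddMonoidAlgebra.single i (algebraMap R K r) : LaurentPolynomial K) = iotaR R K r * T i := by
  rw [iotaR_eq_single, T_eq_single, AddMonoidAlgebra.single_mul_single, zero_add, mul_one]

lemma T_eq_pow_pos {i : ℤ} (hi : 0 ≤ i) :
    (T i : LaurentPolynomial K) = T 1 ^ i.toNat := by
  rw [T_pow]; congr 1; omega

lemma ringA_eq (t : R) (hu : (algebraMap R K t) ≠ 0) : ringA R K = DA t hu := by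
  refine le_antisymm (Subring.closure_le.2 ?_) ?_
  · intro g hg
    simp only [Set.mem_union, Set.mem_range, Set.mem_insert_iff, Set.mem_singleton_iff] at hg
    obtain ⟨r, rfl⟩ | rfl | rfl := hg
    · exact single_mem_Dsub (mem_Sspan_iff.2 ⟨r, by simp⟩)
    · exact single_mem_Dsub (mem_Sspan_iff.2 ⟨1, by simp⟩)
    · exact single_mem_Dsub (mem_Sspan_iff.2 ⟨1, by simp⟩)
  · intro f hf
    refine mem_of_singles_mem fun i _ => ?_
    obtain ⟨r, hr⟩ := mem_Sspan_iff.1 (hf i)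
    rw [hr, zpow_zero, mul_one, single_eq_iota_mul_T]
    exact mul_mem (Subring.subset_closure (Or.inl ⟨r, rfl⟩)) (T_mem_ringA i)

lemma y_mem_ringB (t : R) (n : ℕ) : iotaR R K t ^ n * T (-1) ∈ ringB R K t n :=
  Subring.subset_closure (Or.inr (Set.mem_insert _ _))

lemma yinv_mem_ringB (t : R) (n : ℕ) :
    (LaurentPolynomial.C (algebraMap R K t)⁻¹) ^ n * T 1 ∈ ringB R K t n :=
  Subring.subset_closure (Or.inr (Set.mem_insert_of_mem _ rfl))

lemma T_one_mem_ringM (t : R) (n : ℕ) : (T 1 : LaurentPolynomial K) ∈ ringM R K t n :=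
  Subring.subset_closure (Or.inr (Set.mem_insert _ _))

lemma y_mem_ringM (t : R) (n : ℕ) : iotaR R K t ^ n * T (-1) ∈ ringM R K t n :=
  Subring.subset_closure (Or.inr (Set.mem_insert_of_mem _ rfl))

lemma ringB_eq (t : R) (n : ℕ) (hu : (algebraMap R K t) ≠ 0) :
    ringB R K t n = DB t n hu := by
  refine le_antisymm (Subring.closure_le.2 ?_) ?_
  · intro g hg
    simp only [Set.mem_union, Set.mem_range, Set.mem_insert_iff, Set.mem_singleton_iff] at hg
    obtain ⟨r, rfl⟩ | rfl | rfl := hg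
    · exact single_mem_Dsub (mem_Sspan_iff.2 ⟨r, by simp [cB]⟩)
    · rw [gen_y]
      refine single_mem_Dsub (mem_Sspan_iff.2 ⟨1, ?_⟩)
      rw [map_one, one_mul, show cB n (-1) = (n : ℤ) by simp [cB], zpow_natCast]
    · rw [gen_yinv]
      refine single_mem_Dsub (mem_Sspan_iff.2 ⟨1, ?_⟩)
      rw [map_one, one_mul, show cB n 1 = -(n : ℤ) by simp [cB], zpow_neg, zpow_natCast, inv_pow]
  · intro f hf
    refine mem_of_singles_mem fun i _ => ?_
    obtain ⟨r, hr⟩ := mem_Sspan_iff.1 (hf i)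
    rw [hr, show cB n i = -(n : ℤ) * i from rfl, single_iota_mul]
    refine mul_mem (Subring.subset_closure (Or.inl ⟨r, rfl⟩)) ?_
    rcases le_or_gt 0 i with hi | hi
    · rw [← single_pow_pos (t := t) hu n hi]
      exact pow_mem (yinv_mem_ringB t n) _
    · rw [← single_pow_neg (t := t) hu n hi]
      exact pow_mem (y_mem_ringB t n) _

lemma ringM_eq (t : R) (n : ℕ) (hu : (algebraMap R K t) ≠ 0) :
    ringM R K t n = DM t n hu := by
  refine le_antisymm (Subring.closure_le.2 ?_) ?_
  · intro g hg
    simp only [Set.mem_union, Set.mem_range, Set.mem_insert_iff, Set.mem_singleton_iff] at hg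
    obtain ⟨r, rfl⟩ | rfl | rfl := hg
    · exact single_mem_Dsub (mem_Sspan_iff.2 ⟨r, by simp [cM]⟩)
    · refine single_mem_Dsub (mem_Sspan_iff.2 ⟨1, ?_⟩)
      rw [map_one, one_mul, show cM n 1 = 0 by simp [cM], zpow_zero]
    · rw [gen_y]
      refine single_mem_Dsub (mem_Sspan_iff.2 ⟨1, ?_⟩)
      rw [map_one, one_mul, show cM n (-1) = (n : ℤ) by simp [cM], zpow_natCast]
  · intro f hf
    refine mem_of_singles_mem fun i _ => ?_
    obtain ⟨r, hr⟩ := mem_Sspan_iff.1 (hf i)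
    rcases le_or_gt 0 i with hi | hi
    · have hc : cM n i = 0 := by
        have : 0 ≤ (n : ℤ) * i := mul_nonneg (by positivity) hi
        simp only [cM, neg_mul]; omega
      rw [hr, hc, zpow_zero, mul_one, single_eq_iota_mul_T]
      refine mul_mem (Subring.subset_closure (Or.inl ⟨r, rfl⟩)) ?_
      rw [T_eq_pow_pos hi]
      exact pow_mem (T_one_mem_ringM t n) _
    · have hc : cM n i = -(n : ℤ) * i := by
        have : (n : ℤ) * i ≤ 0 := mul_nonpos_of_nonneg_of_nonpos (by positivity) (le_of_lt hi)
        simp only [cM, neg_mul]; omega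
      rw [hr, hc, single_iota_mul]
      refine mul_mem (Subring.subset_closure (Or.inl ⟨r, rfl⟩)) ?_
      rw [← single_pow_neg (t := t) hu n hi]
      exact pow_mem (y_mem_ringM t n) _

/-! ### Main assembly -/

lemma exists_b_iff {t : R} (hu : (algebraMap R K t) ≠ 0) (n k : ℕ)
    {f : LaurentPolynomial K} :
    (∃ b ∈ DB t n hu, f = b * iotaR R K t ^ k) ↔
      ∀ i : ℤ, f.coeff i ∈ Sspan t (cB n i + k) := by
  have hk : ((algebraMap R K t) ^ k : K) ∈ Sspan t (k : ℤ) := by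
    rw [← zpow_natCast]; exact upow_mem_Sspan
  constructor
  · rintro ⟨b, hb, rfl⟩ i
    rw [iotaR_pow, AddMonoidAlgebra.coeff_mul_single_zero]
    exact mul_mem_Sspan hu le_rfl (hb i) hk
  · intro h
    refine ⟨f * AddMonoidAlgebra.single 0 ((algebraMap R K t) ^ (-(k : ℤ))), fun i => ?_, ?_⟩
    · rw [AddMonoidAlgebra.coeff_mul_single_zero]
      exact mul_mem_Sspan hu (le_of_eq (by ring)) (h i) upow_mem_Sspan
    · rw [iotaR_pow, mul_assoc, AddMonoidAlgebra.single_mul_single, zero_add,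
        ← zpow_natCast (algebraMap R K t) k, ← zpow_add₀ hu, neg_add_cancel, zpow_zero,
        ← AddMonoidAlgebra.one_def, mul_one]

lemma lhs_iff {t : R} (hu : (algebraMap R K t) ≠ 0) (n k : ℕ) {f : LaurentPolynomial K} :
    (f ∈ ringA R K ∧ ∃ b ∈ ringB R K t n, f = b * iotaR R K t ^ k) ↔
      ∀ i : ℤ, f.coeff i ∈ Sspan t (max 0 (cB n i + k)) := by
  rw [ringA_eq t hu, ringB_eq t n hu, exists_b_iff hu n k]
  constructor
  · rintro ⟨h1, h2⟩ i
    rcases le_total (cB n i + k) 0 with h | h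
    · rw [max_eq_left h]; exact h1 i
    · rw [max_eq_right h]; exact h2 i
  · intro h
    exact ⟨fun i => Sspan_mono hu (le_max_left _ _) (h i),
      fun i => Sspan_mono hu (le_max_right _ _) (h i)⟩

lemma rhs_iff {t : R} (hu : (algebraMap R K t) ≠ 0) {n k : ℕ} (hn : 1 ≤ n) (hk : k < n)
    {f : LaurentPolynomial K} :
    (∃ m ∈ ringM R K t n, ∃ m' ∈ ringM R K t n,
        f = m * T 1 + m' * iotaR R K t ^ k) ↔
      ∀ i : ℤ, f.coeff i ∈ Sspan t (max 0 (cB n i + k)) := by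
  rw [ringM_eq t n hu]
  constructor
  · rintro ⟨m, hm, m', hm', rfl⟩ i
    rw [iotaR_pow, AddMonoidAlgebra.coeff_add, Finsupp.add_apply, T_eq_single,
      AddMonoidAlgebra.coeff_mul_single_eq_coeff_mul (x := m) (m₁ := i) (i - 1) (fun a _ => by omega),
      AddMonoidAlgebra.coeff_mul_single_zero, mul_one]
    refine Submodule.add_mem _ ?_ ?_
    · refine Sspan_mono hu ?_ (hm (i - 1))
      simp only [cM, cB, neg_mul]
      have e : (n : ℤ) * (i - 1) = n * i - n := by ring
      rw [e]; omega
    · refine mul_mem_Sspan hu ?_ (hm' i) (by rw [← zpow_natCast]; exact upow_mem_Sspan)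
      simp only [cM, cB, neg_mul]
      omega
  · intro h
    refine ⟨∑ i ∈ f.coeff.support.filter (fun i => 1 ≤ i), AddMonoidAlgebra.single (i - 1) (f.coeff i),
      ?_, ∑ i ∈ f.coeff.support.filter (fun i => ¬ 1 ≤ i),
        AddMonoidAlgebra.single i (f.coeff i * (algebraMap R K t) ^ (-(k : ℤ))), ?_, ?_⟩
    · refine sum_mem fun i hi => ?_
      have hi1 : (1 : ℤ) ≤ i := (Finset.mem_filter.1 hi).2
      refine single_mem_Dsub (Sspan_mono hu ?_ (h i))
      simp only [cM, cB, neg_mul]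
      have e : (n : ℤ) * (i - 1) = n * i - n := by ring
      have hni : (n : ℤ) * 1 ≤ n * i := by
        exact mul_le_mul_of_nonneg_left hi1 (by positivity)
      rw [e]; omega
    · refine sum_mem fun i hi => ?_
      have hi1 : ¬ (1 : ℤ) ≤ i := (Finset.mem_filter.1 hi).2
      refine single_mem_Dsub (mul_mem_Sspan hu ?_ (h i) upow_mem_Sspan)
      simp only [cM, cB, neg_mul]
      have hni : (n : ℤ) * i ≤ 0 :=
        mul_nonpos_of_nonneg_of_nonpos (by positivity) (by omega)
      omega
    · have h1 : (∑ i ∈ f.coeff.support.filter (fun i => 1 ≤ i),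
          (AddMonoidAlgebra.single (i - 1) (f.coeff i) : LaurentPolynomial K)) * T 1
          = ∑ i ∈ f.coeff.support.filter (fun i => 1 ≤ i), AddMonoidAlgebra.single i (f.coeff i) := by
        rw [Finset.sum_mul]
        refine Finset.sum_congr rfl fun i _ => ?_
        rw [T_eq_single, AddMonoidAlgebra.single_mul_single, mul_one]
        congr 1
        omega
      have h2 : (∑ i ∈ f.coeff.support.filter (fun i => ¬ 1 ≤ i),
          (AddMonoidAlgebra.single i (f.coeff i * (algebraMap R K t) ^ (-(k : ℤ))) :
            LaurentPolynomial K)) * iotaR R K t ^ k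
          = ∑ i ∈ f.coeff.support.filter (fun i => ¬ 1 ≤ i), AddMonoidAlgebra.single i (f.coeff i) := by
        rw [iotaR_pow, Finset.sum_mul]
        refine Finset.sum_congr rfl fun i _ => ?_
        rw [AddMonoidAlgebra.single_mul_single, add_zero, mul_assoc,
          ← zpow_natCast (algebraMap R K t) k, ← zpow_add₀ hu, neg_add_cancel, zpow_zero,
          mul_one]
      rw [h1, h2, Finset.sum_filter_add_sum_filter_not]
      exact (AddMonoidAlgebra.sum_coeff_single f).symm

end Statement0Aux

theorem statement0 (R K : Type*) [CommRing R] [IsDomain R] [IsDiscreteValuationRing R]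
    [Field K] [Algebra R K] [IsFractionRing R K]
    (t : R) (ht : Irreducible t) (n k : ℕ) (hn : 1 ≤ n) (hk : k < n)
    (f : LaurentPolynomial K) :
    (f ∈ ringA R K ∧ ∃ b ∈ ringB R K t n, f = b * iotaR R K t ^ k) ↔
      (∃ m ∈ ringM R K t n, ∃ m' ∈ ringM R K t n,
        f = m * LaurentPolynomial.T 1 + m' * iotaR R K t ^ k) := by
  have hu : (algebraMap R K t) ≠ 0 :=
    (map_ne_zero_iff _ (IsFractionRing.injective R K)).2 ht.ne_zero
  exact (Statement0Aux.lhs_iff hu n k).trans (Statement0Aux.rhs_iff hu hn hk).symm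

end
end

section
/- Let R be a discrete valuation ring with uniformizer t, let n ≥ 1 and 0 ≤ k < n, and let A = R[x,y]/(xy − tⁿ). Then the module of relations between the generators x and t^k of the ideal (x, t^k) ⊆ A is generated by the two relations t^k·x = x·t^k and y·x = t^{n−k}·t^k. That is, if a·x = b·t^k with a, b ∈ A, then (a,b) is an A-linear combination of (t^k, x) and (y, t^{n−k}). -/
/- STATEMENT 1: In A = R[x,y]/(xy − tⁿ) with R a DVR with uniformizer t and 0 ≤ k < n,
the module of relations between the generators x and t^k of the ideal (x, t^k) is generated
by the relations t^k·x = x·t^k and y·x = t^{n−k}·t^k: whenever a·x = b·t^k, the pair (a,b)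
is an A-linear combination of (t^k, x) and (y, t^{n−k}). -/

open MvPolynomial

noncomputable section

/-- `A = R[x,y]/(xy − tⁿ)`. -/
abbrev DoublePointRing (R : Type*) [CommRing R] (t : R) (n : ℕ) : Type _ :=
  MvPolynomial (Fin 2) R ⧸ (Ideal.span {(X 0 : MvPolynomial (Fin 2) R) * X 1 - C (t ^ n)})

theorem statement1 (R : Type*) [CommRing R] [IsDomain R] [IsDiscreteValuationRing R]
    (t : R) (ht : Irreducible t) (n k : ℕ) (hn : 1 ≤ n) (hk : k < n)
    (a b : DoublePointRing R t n)
    (x y τ : DoublePointRing R t n)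
    (hx : x = Ideal.Quotient.mk _ (X 0)) (hy : y = Ideal.Quotient.mk _ (X 1))
    (hτ : τ = Ideal.Quotient.mk _ (C t))
    (hrel : a * x = b * τ ^ k) :
    ∃ c d : DoublePointRing R t n,
      a = c * τ ^ k + d * y ∧ b = c * x + d * τ ^ (n - k) := by
  obtain ⟨A, rfl⟩ := Ideal.Quotient.mk_surjective a
  obtain ⟨B, rfl⟩ := Ideal.Quotient.mk_surjective b
  subst hx hy hτ
  have hmem : A * X 0 - B * C t ^ k ∈
      Ideal.span {(X 0 : MvPolynomial (Fin 2) R) * X 1 - C (t ^ n)} := by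
    rw [← Ideal.Quotient.eq_zero_iff_mem]
    rw [← map_pow] at hrel
    simp only [map_sub, map_mul, map_pow, hrel]
    simp [hrel]
  rw [Ideal.mem_span_singleton] at hmem
  obtain ⟨f, hf⟩ := hmem
  have hn' : (C (t ^ n) : MvPolynomial (Fin 2) R) = C t ^ k * C t ^ (n - k) := by
    rw [map_pow, ← pow_add]
    congr 1
    omega
  have key : X 0 * (A - X 1 * f) = C t ^ k * (B - C t ^ (n - k) * f) := by
    rw [hn'] at hf
    linear_combination hf
  have hdvd : (C t ^ k : MvPolynomial (Fin 2) R) ∣ (A - X 1 * f) := by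
    rw [← map_pow, MvPolynomial.C_dvd_iff_dvd_coeff]
    intro m
    have h2 := congrArg (MvPolynomial.coeff (m + Finsupp.single 0 1)) key
    rw [add_comm m] at h2
    rw [MvPolynomial.coeff_X_mul, ← map_pow, MvPolynomial.coeff_C_mul] at h2
    exact ⟨_, h2⟩
  obtain ⟨c', hc'⟩ := hdvd
  have hCne : (C t ^ k : MvPolynomial (Fin 2) R) ≠ 0 :=
    pow_ne_zero _ (by simpa using ht.ne_zero)
  have hB : B - C t ^ (n - k) * f = X 0 * c' := by
    refine (mul_left_cancel₀ hCne ?_).symm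
    rw [← key, hc']
    ring
  refine ⟨Ideal.Quotient.mk _ c', Ideal.Quotient.mk _ f, ?_, ?_⟩
  · have hA : A = c' * C t ^ k + f * X 1 := by linear_combination hc'
    rw [hA]
    simp [map_add, map_mul, map_pow, mul_comm]
  · have hB' : B = c' * X 0 + f * C t ^ (n - k) := by linear_combination hB
    rw [hB']
    simp [map_add, map_mul, map_pow, mul_comm]

end
end

section
/- Let R be a discrete valuation ring with uniformizer t and fraction field K, and n ≥ 1. Inside K[x,x⁻¹] with y = tⁿ/x, one has R[x,x⁻¹] ∩ R[y,y⁻¹] = R[x,y] (the image of R[x,y]/(xy − tⁿ)). Equivalently, every Laurent polynomial f ∈ K[x,x⁻¹] whose coefficients c_d satisfy c_d ∈ R for all d and c_d ∈ t^{−nd}·R for all d ≤ 0 lies in R[x, tⁿ/x]. -/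
/- STATEMENT 2: Inside K[x,x⁻¹] over the fraction field K of a DVR R with uniformizer t,
and with y = tⁿ/x (n ≥ 1), one has R[x,x⁻¹] ∩ R[y,y⁻¹] = R[x, tⁿ/x]
(the statement j_*O = O for the standard double-point model). -/

open LaurentPolynomial

noncomputable section

/-- The subring of Laurent polynomials whose `d`-th coefficient, weighted by `v^d`,
lies in a subring `S` of `K`. -/
def wSub {K : Type*} [Field K] (S : Subring K) (v : K) (hv : v ≠ 0) :
    Subring (LaurentPolynomial K) where
  carrier := {f | ∀ d : ℤ, v ^ d * f.coeff d ∈ S}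
  zero_mem' := by intro d; simpa using S.zero_mem
  one_mem' := by
    intro d
    rw [AddMonoidAlgebra.one_def, AddMonoidAlgebra.coeff_single, Finsupp.single_apply]
    split_ifs with h
    · subst h; simpa using S.one_mem
    · simpa using S.zero_mem
  add_mem' := by
    intro f g hf hg d
    have : v ^ d * (f + g).coeff d = v ^ d * f.coeff d + v ^ d * g.coeff d := by
      rw [AddMonoidAlgebra.coeff_add, Finsupp.add_apply]; ring
    rw [this]
    exact S.add_mem (hf d) (hg d)
  neg_mem' := by
    intro f hf d
    have : v ^ d * (-f).coeff d = -(v ^ d * f.coeff d) := by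
      rw [AddMonoidAlgebra.coeff_neg, Finsupp.neg_apply]; ring
    rw [this]
    exact S.neg_mem (hf d)
  mul_mem' := by
    intro f g hf hg d
    rw [AddMonoidAlgebra.coeff_mul, Finsupp.sum, Finset.mul_sum]
    refine S.sum_mem fun a _ => ?_
    rw [Finsupp.sum, Finset.mul_sum]
    refine S.sum_mem fun b _ => ?_
    split_ifs with h
    · subst h
      have h2 : v ^ (a + b) * (f.coeff a * g.coeff b)
          = (v ^ a * f.coeff a) * (v ^ b * g.coeff b) := by
        rw [zpow_add₀ hv]; ring
      rw [h2]
      exact S.mul_mem (hf a) (hg b)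
    · rw [mul_zero]; exact S.zero_mem

lemma single_mem_wSub {K : Type*} [Field K] {S : Subring K} {v : K} {hv : v ≠ 0}
    {d : ℤ} {c : K} (h : v ^ d * c ∈ S) :
    (AddMonoidAlgebra.single d c : LaurentPolynomial K) ∈ wSub S v hv := by
  intro e
  rw [AddMonoidAlgebra.coeff_single, Finsupp.single_apply]
  split_ifs with he
  · subst he; exact h
  · simpa using S.zero_mem

lemma mem_wSub_iff {K : Type*} [Field K] {S : Subring K} {v : K} {hv : v ≠ 0}
    {f : LaurentPolynomial K} :
    f ∈ wSub S v hv ↔ ∀ d : ℤ, v ^ d * f.coeff d ∈ S := Iff.rfl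

lemma iotaR_eq_single {R K : Type*} [CommRing R] [Field K] [Algebra R K] (r : R) :
    iotaR R K r = AddMonoidAlgebra.single (0 : ℤ) (algebraMap R K r) := by
  rw [single_eq_C_mul_T, T_zero, mul_one]; rfl

lemma gen2_eq_single {R K : Type*} [CommRing R] [Field K] [Algebra R K] (t : R) (n : ℕ) :
    iotaR R K t ^ n * LaurentPolynomial.T (-1)
      = AddMonoidAlgebra.single (-1 : ℤ) ((algebraMap R K t) ^ n) := by
  show (LaurentPolynomial.C (algebraMap R K t)) ^ n * LaurentPolynomial.T (-1) = _
  rw [← map_pow, ← single_eq_C_mul_T]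

theorem statement2 (R K : Type*) [CommRing R] [IsDomain R] [IsDiscreteValuationRing R]
    [Field K] [Algebra R K] [IsFractionRing R K]
    (t : R) (ht : Irreducible t) (n : ℕ) (hn : 1 ≤ n)
    (f : LaurentPolynomial K) :
    (f ∈ ringA R K ∧ f ∈ ringB R K t n) ↔ f ∈ ringM R K t n := by
  have hu : algebraMap R K t ≠ 0 :=
    (map_ne_zero_iff (algebraMap R K) (IsFractionRing.injective R K)).2 ht.ne_zero
  have hun : algebraMap R K t ^ n ≠ 0 := pow_ne_zero _ hu
  constructor
  · rintro ⟨hfA, hfB⟩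
    -- coefficient bounds from membership in ringA and ringB
    have hA : ∀ d : ℤ, f.coeff d ∈ (algebraMap R K).range := by
      have hle : ringA R K ≤ wSub (algebraMap R K).range 1 one_ne_zero := by
        rw [ringA, Subring.closure_le]
        rintro x (⟨r, rfl⟩ | hx)
        · rw [iotaR_eq_single]
          exact single_mem_wSub (by simpa using RingHom.mem_range_self _ r)
        · rcases hx with rfl | rfl
          · exact single_mem_wSub (by simpa using Subring.one_mem _)
          · exact single_mem_wSub (by simpa using Subring.one_mem _)
      intro d
      simpa using (hle hfA) d
    have hB : ∀ d : ℤ, (algebraMap R K t ^ n) ^ d * f.coeff d ∈ (algebraMap R K).range := by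
      have hle : ringB R K t n ≤ wSub (algebraMap R K).range (algebraMap R K t ^ n) hun := by
        rw [ringB, Subring.closure_le]
        rintro x (⟨r, rfl⟩ | hx)
        · rw [iotaR_eq_single]
          exact single_mem_wSub (by simpa using RingHom.mem_range_self _ r)
        · rcases hx with rfl | rfl
          · rw [gen2_eq_single]
            refine single_mem_wSub ?_
            have h1 : (algebraMap R K t ^ n) ^ (-1 : ℤ) * algebraMap R K t ^ n = 1 := by
              rw [zpow_neg_one, inv_mul_cancel₀ hun]
            rw [h1]; exact Subring.one_mem _
          · have h0 : LaurentPolynomial.C (algebraMap R K t)⁻¹ ^ n * LaurentPolynomial.T 1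
                = AddMonoidAlgebra.single (1 : ℤ) ((algebraMap R K t)⁻¹ ^ n) := by
              rw [← map_pow, ← single_eq_C_mul_T]
            rw [h0]
            refine single_mem_wSub ?_
            have h1 : (algebraMap R K t ^ n) ^ (1 : ℤ) * (algebraMap R K t)⁻¹ ^ n = 1 := by
              rw [zpow_one, ← mul_pow, mul_inv_cancel₀ hu, one_pow]
            rw [h1]; exact Subring.one_mem _
      exact fun d => (hle hfB) d
    -- assemble f inside ringM coefficient by coefficient
    rw [← AddMonoidAlgebra.sum_coeff_single f, Finsupp.sum]
    refine Subring.sum_mem _ fun d _ => ?_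
    rcases le_or_gt 0 d with hd | hd
    · obtain ⟨r, hr⟩ := hA d
      have heq : (AddMonoidAlgebra.single d (f.coeff d) : LaurentPolynomial K)
          = iotaR R K r * LaurentPolynomial.T 1 ^ d.toNat := by
        rw [T_pow, mul_one, Int.toNat_of_nonneg hd, single_eq_C_mul_T, ← hr]
        rfl
      rw [heq]
      refine Subring.mul_mem _ ?_ (Subring.pow_mem _ ?_ _)
      · exact Subring.subset_closure (Set.mem_union_left _ (Set.mem_range_self r))
      · exact Subring.subset_closure (Set.mem_union_right _ (Set.mem_insert _ _))
    · set m : ℕ := (-d).toNat with hm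
      have hmz : (m : ℤ) = -d := Int.toNat_of_nonneg (by omega)
      obtain ⟨r, hr⟩ := hB d
      have hfd : f.coeff d = algebraMap R K r * (algebraMap R K t ^ n) ^ m := by
        have h1 : (algebraMap R K t ^ n) ^ (m : ℤ)
            * ((algebraMap R K t ^ n) ^ d * f.coeff d) = f.coeff d := by
          rw [← mul_assoc, ← zpow_add₀ hun, hmz, neg_add_cancel, zpow_zero, one_mul]
        rw [← hr, zpow_natCast] at h1
        rw [← h1]; ring
      have heq : (AddMonoidAlgebra.single d (f.coeff d) : LaurentPolynomial K)
          = iotaR R K r * (iotaR R K t ^ n * LaurentPolynomial.T (-1)) ^ m := by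
        rw [iotaR_eq_single, gen2_eq_single, AddMonoidAlgebra.single_pow,
          AddMonoidAlgebra.single_mul_single, zero_add, hfd]
        congr 1
        rw [nsmul_eq_mul]; omega
      rw [heq]
      refine Subring.mul_mem _ ?_ (Subring.pow_mem _ ?_ _)
      · exact Subring.subset_closure (Set.mem_union_left _ (Set.mem_range_self r))
      · exact Subring.subset_closure (Set.mem_union_right _ (Set.mem_insert_of_mem _ rfl))
  · intro hfM
    constructor
    · -- ringM ≤ ringA
      refine (show ringM R K t n ≤ ringA R K from ?_) hfM
      rw [ringM, Subring.closure_le]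
      rintro x (hx | hx)
      · exact Subring.subset_closure (Set.mem_union_left _ hx)
      · rcases hx with rfl | rfl
        · exact Subring.subset_closure (Set.mem_union_right _ (Set.mem_insert _ _))
        · refine Subring.mul_mem _ (Subring.pow_mem _ ?_ _) ?_
          · exact Subring.subset_closure (Set.mem_union_left _ (Set.mem_range_self t))
          · exact Subring.subset_closure
              (Set.mem_union_right _ (Set.mem_insert_of_mem _ rfl))
    · -- ringM ≤ ringB
      refine (show ringM R K t n ≤ ringB R K t n from ?_) hfM
      rw [ringM, Subring.closure_le]
      rintro x (hx | hx)
      · exact Subring.subset_closure (Set.mem_union_left _ hx)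
      · rcases hx with rfl | rfl
        · have hT : LaurentPolynomial.T (1 : ℤ)
              = iotaR R K t ^ n *
                (LaurentPolynomial.C (algebraMap R K t)⁻¹ ^ n * LaurentPolynomial.T 1) := by
            have h0 : iotaR R K t ^ n * LaurentPolynomial.C (algebraMap R K t)⁻¹ ^ n = 1 := by
              show LaurentPolynomial.C (algebraMap R K t) ^ n
                  * LaurentPolynomial.C (algebraMap R K t)⁻¹ ^ n = 1
              rw [← mul_pow, ← map_mul, mul_inv_cancel₀ hu, map_one, one_pow]
            rw [← mul_assoc, h0, one_mul]
          rw [hT]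
          refine Subring.mul_mem _ (Subring.pow_mem _ ?_ _) ?_
          · exact Subring.subset_closure (Set.mem_union_left _ (Set.mem_range_self t))
          · exact Subring.subset_closure
              (Set.mem_union_right _ (Set.mem_insert_of_mem _ rfl))
        · exact Subring.subset_closure (Set.mem_union_right _ (Set.mem_insert _ _))

end
end
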